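/- Let P be a finite poset, g ∈ C(P), and e ∈ P. Define h : P → [0,1] by h(x) = g(x) for x ≠ e and h(e) = 1 − max{ Σ_{i=1}^k g(y_i) | (y_1, …, y_k) a maximal chain of P containing e }. Then: (1) h ∈ C(P); and (2) if g is the indicator function of an antichain A ∈ A(P), then h is the indicator function of τ_e(A), where τ_e is the combinatorial antichain toggle. -/

import Mathlib

open scoped Classical

variable {P : Type*} [PartialOrder P]

/-- Membership in the chain polytope `C(P)`: nonnegative labels whose sum along every
chain is at most 1. -/
def InChainPolytope (P : Type*) [PartialOrder P] (g : P → ℝ) : Prop :=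
  (∀ x : P, 0 ≤ g x) ∧ ∀ l : List P, l.Chain' (· < ·) → (l.map g).sum ≤ 1

/-- Membership in the order-reversing polytope `OR(P)`. -/
def InORPolytope (P : Type*) [PartialOrder P] (f : P → ℝ) : Prop :=
  (∀ x : P, 0 ≤ f x ∧ f x ≤ 1) ∧ ∀ ⦃x y : P⦄, x ≤ y → f y ≤ f x

/-- Membership in the order-preserving polytope `OP(P)`. -/
def InOPPolytope (P : Type*) [PartialOrder P] (f : P → ℝ) : Prop :=
  (∀ x : P, 0 ≤ f x ∧ f x ≤ 1) ∧ ∀ ⦃x y : P⦄, x ≤ y → f x ≤ f y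

/-- The poset `P̂`, obtained from `P` by adjoining a minimum `m̂ = ⊥` and a
maximum `M̂ = ⊤`. -/
abbrev PHat (P : Type*) := WithBot (WithTop P)

/-- The inclusion of `P` into `P̂`. -/
def toHat (x : P) : PHat P := ((x : WithTop P) : PHat P)

/-- Extension of an order-reversing labeling to `P̂`, with `f(m̂) = 1`, `f(M̂) = 0`. -/
noncomputable def hatOR (f : P → ℝ) : PHat P → ℝ := fun y =>
  WithBot.recBotCoe 1 (fun w => WithTop.recTopCoe 0 f w) y

/-- Extension of an order-preserving labeling to `P̂`, with `f(m̂) = 0`, `f(M̂) = 1`. -/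
noncomputable def hatOP (f : P → ℝ) : PHat P → ℝ := fun y =>
  WithBot.recBotCoe 0 (fun w => WithTop.recTopCoe 1 f w) y

/-- The saturated chains `x = y_1 ⋖ y_2 ⋖ ⋯ ⋖ y_k` from `x` up to a maximal element. -/
def maxChainsFrom (x : P) : Set (List P) :=
  {l | l.Chain' (· ⋖ ·) ∧ l.head? = some x ∧ ∃ z, l.getLast? = some z ∧ IsMax z}

/-- The saturated chains `y_1 ⋖ ⋯ ⋖ y_k = x` from a minimal element up to `x`. -/
def maxChainsTo (x : P) : Set (List P) :=
  {l | l.Chain' (· ⋖ ·) ∧ (∃ a, l.head? = some a ∧ IsMin a) ∧ l.getLast? = some x}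

/-- The maximal chains of `P` containing `e`. -/
def maxChainsThru (e : P) : Set (List P) :=
  {l | l.Chain' (· ⋖ ·) ∧ (∃ a, l.head? = some a ∧ IsMin a) ∧
    (∃ z, l.getLast? = some z ∧ IsMax z) ∧ e ∈ l}

/-- The transfer map `OR : C(P) → OR(P)`:
`(OR g)(x) = max{ g(y_1) + ⋯ + g(y_k) | x = y_1 ⋖ ⋯ ⋖ y_k, y_k maximal }`. -/
noncomputable def ORmap (g : P → ℝ) (x : P) : ℝ :=
  sSup ((fun l => (l.map g).sum) '' maxChainsFrom x)

/-- The transfer map `OP : C(P) → OP(P)`: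
`(OP g)(x) = max{ g(y_1) + ⋯ + g(y_k) | y_1 ⋖ ⋯ ⋖ y_k = x, y_1 minimal }`. -/
noncomputable def OPmap (g : P → ℝ) (x : P) : ℝ :=
  sSup ((fun l => (l.map g).sum) '' maxChainsTo x)

/-- The inverse transfer map: `(OR⁻¹ f)(x) = f(x) - max{ f(y) | y ⋗ x in P̂ }`. -/
noncomputable def ORinv (f : P → ℝ) (x : P) : ℝ :=
  f x - sSup {v : ℝ | ∃ y : PHat P, toHat x ⋖ y ∧ v = hatOR f y}

/-- The inverse transfer map: `(OP⁻¹ f)(x) = f(x) - max{ f(y) | y ⋖ x in P̂ }`. -/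
noncomputable def OPinv (f : P → ℝ) (x : P) : ℝ :=
  f x - sSup {v : ℝ | ∃ y : PHat P, y ⋖ toHat x ∧ v = hatOP f y}

/-- The piecewise-linear order ideal toggle on the order-reversing polytope:
the label of `e` is replaced by
`max{f(y) | y ⋗ e in P̂} + min{f(y) | y ⋖ e in P̂} - f(e)`. -/
noncomputable def tPL (e : P) (f : P → ℝ) : P → ℝ :=
  Function.update f e
    (sSup {v : ℝ | ∃ y : PHat P, toHat e ⋖ y ∧ v = hatOR f y}
      + sInf {v : ℝ | ∃ y : PHat P, y ⋖ toHat e ∧ v = hatOR f y} - f e)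

/-- The piecewise-linear antichain (chain polytope) toggle: the label of `e` is replaced
by `1 - max{ Σ g(y_i) | (y_1,…,y_k) a maximal chain of P containing e }`. -/
noncomputable def tauPL (e : P) (g : P → ℝ) : P → ℝ :=
  Function.update g e (1 - sSup ((fun l => (l.map g).sum) '' maxChainsThru e))

/-- The indicator function of a subset. -/
noncomputable def ind (S : Set P) : P → ℝ := fun x => if x ∈ S then 1 else 0

def listComp {α : Type*} (fs : List (α → α)) : α → α := fs.foldr (· ∘ ·) id

abbrev OrderIdealSub (P : Type*) [PartialOrder P] : Type _ := {I : Set P // IsLowerSet I}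

abbrev AntichainSub (P : Type*) [PartialOrder P] : Type _ := {A : Set P // IsAntichain (· ≤ ·) A}

noncomputable def togFun (e : P) (I : OrderIdealSub P) : OrderIdealSub P :=
  if _h : e ∈ I.1 then
    if h2 : IsLowerSet (I.1 \ {e}) then ⟨I.1 \ {e}, h2⟩ else I
  else
    if h2 : IsLowerSet (insert e I.1) then ⟨insert e I.1, h2⟩ else I

noncomputable def atogFun (e : P) (A : AntichainSub P) : AntichainSub P :=
  if _h : e ∈ A.1 then ⟨A.1 \ {e}, A.2.subset Set.diff_subset⟩
  else if h2 : IsAntichain (· ≤ ·) (insert e A.1) then ⟨insert e A.1, h2⟩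
  else A

lemma sum_le_sum_of_sublist {g : P → ℝ} (hg : ∀ x, 0 ≤ g x) {l m : List P}
    (h : l.Sublist m) : (l.map g).sum ≤ (m.map g).sum := by
  induction h with
  | slnil => simp
  | cons a h ih => simpa using le_add_of_nonneg_of_le (hg a) ih
  | cons_cons a h ih => simpa using ih

lemma exists_sat_chain_to [Fintype P] :
    ∀ n (x y : P), (Set.Ioc x y).ncard ≤ n → x < y →
      ∃ l : List P, l ≠ [] ∧ l.head? = some x ∧ (l ++ [y]).Chain' (· ⋖ ·) := by
  intro n
  induction n with
  | zero =>
    intro x y hc hxy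
    have : y ∈ Set.Ioc x y := by simp [hxy]
    have := (Set.ncard_pos (Set.toFinite _)).mpr ⟨y, this⟩
    omega
  | succ n ih =>
    intro x y hc hxy
    haveI : LocallyFiniteOrder P := Fintype.toLocallyFiniteOrder
    obtain ⟨c, hxc, hcy⟩ := exists_covBy_le_of_lt hxy
    rcases eq_or_lt_of_le hcy with rfl | hcy'
    · exact ⟨[x], by simp, rfl, List.isChain_pair.mpr hxc⟩
    · have hsub : Set.Ioc c y ⊂ Set.Ioc x y := by
        constructor
        · intro z hz
          exact ⟨hxc.lt.trans hz.1, hz.2⟩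
        · intro hsb
          exact absurd (hsb ⟨hxc.lt, hcy⟩).1 (lt_irrefl c)
      have hcard : (Set.Ioc c y).ncard ≤ n := by
        have := Set.ncard_lt_ncard hsub (Set.toFinite _)
        omega
      obtain ⟨l, hl0, hlh, hlc⟩ := ih c y hcard hcy'
      refine ⟨x :: l, by simp, rfl, ?_⟩
      unfold List.Chain'; rw [List.cons_append, List.isChain_cons]
      refine ⟨?_, hlc⟩
      intro b hb
      have hh : (l ++ [y]).head? = some c := by
        cases l with
        | nil => simp at hl0
        | cons a t => simpa using hlh
      rw [hh] at hb
      cases hb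
      exact hxc

lemma exists_sat_chain_up [Fintype P] :
    ∀ n (x : P), (Set.Ioi x).ncard ≤ n →
      ∃ l : List P, l.head? = some x ∧ l.Chain' (· ⋖ ·) ∧
        ∃ z, l.getLast? = some z ∧ IsMax z := by
  intro n
  induction n with
  | zero =>
    intro x hc
    refine ⟨[x], rfl, List.isChain_singleton x, x, rfl, ?_⟩
    by_contra hm
    obtain ⟨b, hb⟩ := not_isMax_iff.mp hm
    have := (Set.ncard_pos (Set.toFinite (Set.Ioi x))).mpr ⟨b, Set.mem_Ioi.mpr hb⟩
    omega
  | succ n ih =>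
    intro x hc
    by_cases hm : IsMax x
    · exact ⟨[x], rfl, List.isChain_singleton x, x, rfl, hm⟩
    · obtain ⟨c, hxc⟩ := exists_covBy_of_wellFoundedLT hm
      have hsub : Set.Ioi c ⊂ Set.Ioi x := by
        constructor
        · intro z hz; exact hxc.lt.trans hz
        · intro hsb; exact absurd (hsb hxc.lt) (lt_irrefl c)
      have hcard : (Set.Ioi c).ncard ≤ n := by
        have := Set.ncard_lt_ncard hsub (Set.toFinite _)
        omega
      obtain ⟨l, hlh, hlc, z, hlz, hz⟩ := ih c hcard
      cases l with
      | nil => simp at hlh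
      | cons b t =>
        cases hlh
        exact ⟨x :: c :: t, rfl, List.isChain_cons_cons.mpr ⟨hxc, hlc⟩, z,
          by rw [List.getLast?_cons_cons]; exact hlz, hz⟩

lemma exists_sat_chain_down [Fintype P] :
    ∀ n (x : P), (Set.Iio x).ncard ≤ n →
      ∃ l : List P, (l ++ [x]).Chain' (· ⋖ ·) ∧
        ∃ a, (l ++ [x]).head? = some a ∧ IsMin a := by
  intro n
  induction n with
  | zero =>
    intro x hc
    refine ⟨[], List.isChain_singleton x, x, rfl, ?_⟩
    by_contra hm
    obtain ⟨b, hb⟩ := not_isMin_iff.mp hm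
    have := (Set.ncard_pos (Set.toFinite (Set.Iio x))).mpr ⟨b, Set.mem_Iio.mpr hb⟩
    omega
  | succ n ih =>
    intro x hc
    by_cases hm : IsMin x
    · exact ⟨[], List.isChain_singleton x, x, rfl, hm⟩
    · obtain ⟨c, hxc⟩ := exists_covBy_of_wellFoundedGT hm
      have hsub : Set.Iio c ⊂ Set.Iio x := by
        constructor
        · intro z hz; exact hz.trans hxc.lt
        · intro hsb; exact absurd (hsb hxc.lt) (lt_irrefl c)
      have hcard : (Set.Iio c).ncard ≤ n := by
        have := Set.ncard_lt_ncard hsub (Set.toFinite _)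
        omega
      obtain ⟨l, hlc, a, hla, ha⟩ := ih c hcard
      refine ⟨l ++ [c], ?_, a, ?_, ha⟩
      · unfold List.Chain'; rw [List.isChain_append]
        refine ⟨hlc, List.isChain_singleton x, ?_⟩
        intro p hp q hq
        rw [List.getLast?_concat] at hp
        cases hp
        cases hq
        exact hxc
      · rw [List.head?_append] at hla ⊢
        cases l with
        | nil => simpa using hla
        | cons b t => simpa using hla

lemma refine_chain [Fintype P] :
    ∀ l : List P, l.Chain' (· < ·) → l ≠ [] →
      ∃ m : List P, m.Chain' (· ⋖ ·) ∧ m.head? = l.head? ∧ m.getLast? = l.getLast? ∧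
        l.Sublist m := by
  intro l
  induction l with
  | nil => simp
  | cons a t ih =>
    intro hc _
    cases t with
    | nil => exact ⟨[a], List.isChain_singleton a, rfl, rfl, List.Sublist.refl _⟩
    | cons b t2 =>
      have hab : a < b := (List.isChain_cons_cons.mp hc).1
      obtain ⟨m', hm'c, hm'h, hm'l, hm's⟩ := ih (List.isChain_cons_cons.mp hc).2 (by simp)
      obtain ⟨s, hs0, hsh, hsc⟩ := exists_sat_chain_to (Set.Ioc a b).ncard a b le_rfl hab
      have hm'h' : m'.head? = some b := by rw [hm'h]; rfl
      have hslast : ∀ p ∈ s.getLast?, p ⋖ b := by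
        intro p hp
        exact (List.isChain_append.mp hsc).2.2 p hp b rfl
      obtain ⟨u, v, rfl⟩ : ∃ u v, s = u :: v := by
        cases s with
        | nil => exact absurd rfl hs0
        | cons u v => exact ⟨u, v, rfl⟩
      have hua : u = a := by simpa using hsh
      subst hua
      refine ⟨(u :: v) ++ m', ?_, ?_, ?_, ?_⟩
      · unfold List.Chain'; rw [List.isChain_append]
        refine ⟨(List.isChain_append.mp hsc).1, hm'c, ?_⟩
        intro p hp q hq
        rw [hm'h'] at hq
        cases hq
        exact hslast p hp
      · simp
      · rw [List.getLast?_append]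
        have : m'.getLast? = (b :: t2).getLast? := hm'l
        have h2 : m' ≠ [] := by
          intro h; rw [h] at hm'h'; simp at hm'h'
        rw [List.getLast?_cons_cons]
        rw [← this]
        cases m' with
        | nil => exact absurd rfl h2
        | cons w ws =>
          have : (w :: ws).getLast? = some ((w :: ws).getLast (by simp)) :=
            List.getLast?_eq_getLast _
          rw [this]
          rfl
      · rw [List.cons_append]
        exact List.Sublist.cons₂ u (hm's.trans (List.sublist_append_right v m'))

lemma exists_maxchain [Fintype P] {l : List P} (hl : l.Chain' (· < ·)) {e : P}
    (he : e ∈ l) : ∃ m ∈ maxChainsThru e, l.Sublist m := by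
  have hne : l ≠ [] := by rintro rfl; simp at he
  obtain ⟨m₀, hm₀c, hm₀h, hm₀l, hm₀s⟩ := refine_chain l hl hne
  obtain ⟨a, t, rfl⟩ : ∃ a t, m₀ = a :: t := by
    cases m₀ with
    | nil => rw [List.sublist_nil] at hm₀s; exact absurd hm₀s hne
    | cons a t => exact ⟨a, t, rfl⟩
  obtain ⟨z, hzl⟩ : ∃ z, (a :: t).getLast? = some z := ⟨_, List.getLast?_eq_getLast (by simp)⟩
  obtain ⟨d, hdc, w, hdh, hw⟩ := exists_sat_chain_down (Set.Iio a).ncard a le_rfl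
  obtain ⟨u, huh, huc, z', huz, hz'⟩ := exists_sat_chain_up (Set.Ioi z).ncard z le_rfl
  obtain ⟨u', rfl⟩ : ∃ u', u = z :: u' := by
    cases u with
    | nil => simp at huh
    | cons p q => exact ⟨q, by simpa using congrArg (List.cons · q) (by simpa using huh)⟩
  refine ⟨d ++ ((a :: t) ++ u'), ⟨?_, ⟨w, ?_, hw⟩, ⟨z', ?_, hz'⟩, ?_⟩, ?_⟩
  · unfold List.Chain'; rw [List.isChain_append]
    refine ⟨(List.isChain_append.mp hdc).1, ?_, ?_⟩
    · rw [List.isChain_append]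
      refine ⟨hm₀c, (List.isChain_cons.mp huc).2, ?_⟩
      intro p hp q hq
      rw [hzl] at hp
      cases hp
      exact (List.isChain_cons.mp huc).1 q hq
    · intro p hp q hq
      have hqa : a = q := by simpa using hq
      exact hqa ▸ (List.isChain_append.mp hdc).2.2 p hp a rfl
  · rw [List.head?_append] at hdh ⊢
    cases d with
    | nil => simpa using hdh
    | cons p q => simpa using hdh
  · rw [List.getLast?_append, List.getLast?_append]
    cases u' with
    | nil =>
      have hz2 : z = z' := by simpa using huz
      subst hz2
      simp [hzl]
    | cons p q =>
      rw [List.getLast?_cons_cons] at huz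
      simp [huz]
  · exact List.mem_append.mpr (Or.inr (List.mem_append.mpr (Or.inl (hm₀s.mem he))))
  · exact (hm₀s.trans (List.sublist_append_right d _ |>.trans (by rfl))).trans
      (by exact ((a :: t).sublist_append_left u').append_left d)



lemma ind_nonneg (A : Set P) (x : P) : 0 ≤ ind A x := by
  unfold ind; split <;> norm_num

lemma ind_sum_le_one {A : Set P} (hA : IsAntichain (· ≤ ·) A) :
    ∀ {l : List P}, l.Pairwise (· < ·) → (l.map (ind A)).sum ≤ 1 := by
  intro l
  induction l with
  | nil => intro _; simp
  | cons a t ih =>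
    intro hp
    by_cases ha : a ∈ A
    · have h0 : (t.map (ind A)).sum = 0 := by
        apply List.sum_eq_zero
        intro y hy
        obtain ⟨x, hx, rfl⟩ := List.mem_map.mp hy
        have hax : a < x := (List.pairwise_cons.mp hp).1 x hx
        have hxA : x ∉ A := fun hxA => hA ha hxA (ne_of_lt hax) hax.le
        simp [ind, hxA]
      simp [ind, ha, h0]
    · have hih := ih (List.pairwise_cons.mp hp).2
      simp only [List.map_cons, List.sum_cons, ind, if_neg ha]
      linarith

lemma one_le_ind_sum {A : Set P} {e : P} (heA : e ∈ A) {l : List P} (hel : e ∈ l) :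
    1 ≤ (l.map (ind A)).sum := by
  have hnn : ∀ y ∈ l.map (ind A), 0 ≤ y := by
    intro y hy
    obtain ⟨x, _, rfl⟩ := List.mem_map.mp hy
    exact ind_nonneg A x
  have h1 : ind A e ≤ (l.map (ind A)).sum :=
    List.single_le_sum hnn _ (List.mem_map.mpr ⟨e, hel, rfl⟩)
  rw [ind, if_pos heA] at h1
  exact h1


/-- For `g` in the chain polytope and `e ∈ P`, the function `h` agreeing with `g` away
from `e` and with `h(e) = 1 - max{ Σ g(y_i) | (y_1,…,y_k) maximal chain through e }`
is again in the chain polytope; and if `g` is the indicator function of an antichain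
`A`, then `h` is the indicator function of `τ_e(A)`. -/
theorem tauPL_mem_and_restricts_to_toggle
    (P : Type*) [PartialOrder P] [Fintype P] (e : P) (g : P → ℝ)
    (hg : InChainPolytope P g) :
    InChainPolytope P (tauPL e g) ∧
    ∀ A : AntichainSub P, g = ind A.1 → tauPL e g = ind (atogFun e A).1 := by
  have hSne : ((fun l => (l.map g).sum) '' maxChainsThru e).Nonempty := by
    obtain ⟨m, hm, -⟩ := exists_maxchain (List.isChain_singleton e) (List.mem_singleton_self e)
    exact ⟨_, ⟨m, hm, rfl⟩⟩
  have hSle : ∀ v ∈ (fun l => (l.map g).sum) '' maxChainsThru e, v ≤ 1 := by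
    rintro v ⟨m, hm, rfl⟩
    exact hg.2 m (hm.1.imp fun _ _ h => h.lt)
  have hSbdd : BddAbove ((fun l => (l.map g).sum) '' maxChainsThru e) :=
    ⟨1, fun v hv => hSle v hv⟩
  have hM1 : sSup ((fun l => (l.map g).sum) '' maxChainsThru e) ≤ 1 := csSup_le hSne hSle
  have key : ∀ m ∈ maxChainsThru e,
      (m.map g).sum ≤ sSup ((fun l => (l.map g).sum) '' maxChainsThru e) :=
    fun m hm => le_csSup hSbdd ⟨m, hm, rfl⟩
  constructor
  · constructor
    · intro x
      by_cases hx : x = e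
      · subst hx
        rw [tauPL, Function.update_self]
        linarith
      · rw [tauPL, Function.update_of_ne hx]
        exact hg.1 x
    · intro l hl
      by_cases hel : e ∈ l
      · have hnd : l.Nodup := (List.isChain_iff_pairwise.mp hl).imp ne_of_lt
        have hperm : List.Perm l (e :: l.erase e) := List.perm_cons_erase hel
        rw [(hperm.map (tauPL e g)).sum_eq]
        simp only [List.map_cons, List.sum_cons]
        have h2 : (l.erase e).map (tauPL e g) = (l.erase e).map g := by
          apply List.map_congr_left
          intro x hx
          have hxe : x ≠ e := by
            rintro rfl
            exact (List.Nodup.not_mem_erase hnd) hx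
          rw [tauPL, Function.update_of_ne hxe]
        obtain ⟨m, hm, hsub⟩ := exists_maxchain hl hel
        have h3 : ((l.erase e).map g).sum ≤
            sSup ((fun l => (l.map g).sum) '' maxChainsThru e) :=
          le_trans (sum_le_sum_of_sublist hg.1 ((List.erase_sublist (a := e) (l := l)).trans hsub)) (key m hm)
        rw [h2, tauPL, Function.update_self]
        linarith
      · have h2 : l.map (tauPL e g) = l.map g := by
          apply List.map_congr_left
          intro x hx
          have hxe : x ≠ e := by rintro rfl; exact hel hx
          rw [tauPL, Function.update_of_ne hxe]
        rw [h2]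
        exact hg.2 l hl
  · intro A hgA
    subst hgA
    have hA := A.2
    by_cases heA : e ∈ A.1
    · have hsup : sSup ((fun l => (l.map (ind A.1)).sum) '' maxChainsThru e) = 1 := by
        refine le_antisymm hM1 ?_
        obtain ⟨v, hv⟩ := hSne
        have hv1 : v = 1 := by
          obtain ⟨m, hm, rfl⟩ := hv
          exact le_antisymm (hSle _ ⟨m, hm, rfl⟩) (one_le_ind_sum heA hm.2.2.2)
        exact hv1 ▸ le_csSup hSbdd hv
      rw [tauPL, hsup, atogFun, dif_pos heA]
      funext x
      by_cases hx : x = e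
      · subst hx
        rw [Function.update_self]
        simp [ind]
      · rw [Function.update_of_ne hx]
        simp [ind, Set.mem_diff, hx]
    · by_cases hins : IsAntichain (· ≤ ·) (insert e A.1)
      · have hval : ∀ v ∈ (fun l => (l.map (ind A.1)).sum) '' maxChainsThru e, v = 0 := by
          rintro v ⟨m, hm, rfl⟩
          apply List.sum_eq_zero
          intro y hy
          obtain ⟨x, hx, rfl⟩ := List.mem_map.mp hy
          have hxA : x ∉ A.1 := by
            intro hxA
            have hxe : x ≠ e := by rintro rfl; exact heA hxA
            have hp : m.Pairwise (fun a b => a < b ∨ b < a) :=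
              (List.isChain_iff_pairwise.mp (hm.1.imp fun _ _ h => h.lt)).imp Or.inl
            have hcomp := (haveI : Std.Symm (fun a b : P => a < b ∨ b < a) := ⟨fun a b h => h.symm⟩; hp.forall hx hm.2.2.2 hxe)
            rcases hcomp with h | h
            · exact hins (Set.mem_insert_of_mem _ hxA) (Set.mem_insert e _) hxe h.le
            · exact hins (Set.mem_insert e _) (Set.mem_insert_of_mem _ hxA) (Ne.symm hxe) h.le
          simp [ind, hxA]
        have hsup : sSup ((fun l => (l.map (ind A.1)).sum) '' maxChainsThru e) = 0 := by
          refine le_antisymm (csSup_le hSne fun v hv => (hval v hv).le) ?_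
          obtain ⟨v, hv⟩ := hSne
          exact (hval v hv) ▸ le_csSup hSbdd hv
        rw [tauPL, hsup, atogFun, dif_neg heA, dif_pos hins]
        funext x
        by_cases hx : x = e
        · subst hx
          rw [Function.update_self]
          simp [ind]
        · rw [Function.update_of_ne hx]
          simp [ind, Set.mem_insert_iff, hx]
      · obtain ⟨a, haA, hcomp⟩ : ∃ a ∈ A.1, a < e ∨ e < a := by
          by_contra hno
          push_neg at hno
          apply hins
          intro x hx y hy hxy hle
          rcases hx with rfl | hx
          · rcases hy with rfl | hy
            · exact hxy rfl
            · exact (hno y hy).2 (lt_of_le_of_ne hle hxy)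
          · rcases hy with rfl | hy
            · exact (hno x hx).1 (lt_of_le_of_ne hle hxy)
            · exact hA hx hy hxy hle
        have hmem : (1 : ℝ) ∈ (fun l => (l.map (ind A.1)).sum) '' maxChainsThru e := by
          rcases hcomp with h | h
          · obtain ⟨m, hm, hsub⟩ := exists_maxchain (List.isChain_pair.mpr h)
              (by simp : e ∈ [a, e])
            exact ⟨m, hm, le_antisymm (hSle _ ⟨m, hm, rfl⟩)
              (one_le_ind_sum haA (hsub.mem (by simp)))⟩
          · obtain ⟨m, hm, hsub⟩ := exists_maxchain (List.isChain_pair.mpr h)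
              (by simp : e ∈ [e, a])
            exact ⟨m, hm, le_antisymm (hSle _ ⟨m, hm, rfl⟩)
              (one_le_ind_sum haA (hsub.mem (by simp)))⟩
        have hsup : sSup ((fun l => (l.map (ind A.1)).sum) '' maxChainsThru e) = 1 :=
          le_antisymm hM1 (le_csSup hSbdd hmem)
        rw [tauPL, hsup, atogFun, dif_neg heA, dif_neg hins]
        have hge : ind A.1 e = 0 := by simp [ind, heA]
        rw [show (1 : ℝ) - 1 = ind A.1 e by rw [hge]; ring, Function.update_eq_self]
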